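/- Let X, Y be two-dimensional smooth real Banach spaces with Y strictly convex. Let T : X → Y have rank 2, ‖T‖ = 1, M_T = {±x}, y a unit vector with x ⊥_B y, k = ‖Ty‖, w = Ty/k. If T is not an extreme contraction, then (x, Tx) is a μ-CPP with respect to (y, w) for some μ > k. -/

import Mathlib

open Metric

/-- Birkhoff-James orthogonality: `x ⊥_B y` iff `‖x + t y‖ ≥ ‖x‖` for all real `t`. -/
def BJOrth {X : Type*} [NormedAddCommGroup X] [NormedSpace ℝ X] (x y : X) : Prop :=
  ∀ t : ℝ, ‖x‖ ≤ ‖x + t • y‖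

/-- `(x, y)` is a compatible point pair with constant `(r, μ)`. -/
def IsCPPConst {X Y : Type*} [NormedAddCommGroup X] [NormedSpace ℝ X]
    [NormedAddCommGroup Y] [NormedSpace ℝ Y] (x : X) (y : Y) (r μ : ℝ) : Prop :=
  ∀ z : X, ‖z‖ = 1 → BJOrth x z → ∀ w : Y, ‖w‖ = 1 → BJOrth y w →
    ∀ a b : ℝ, ‖a • x + b • z - x‖ ≤ r → ‖a • x + b • z‖ = 1 →
      ‖a • y + (b * μ) • w‖ ≤ 1

/-- `(x, y)` is a compatible point pair (CPP). -/
def IsCPP {X Y : Type*} [NormedAddCommGroup X] [NormedSpace ℝ X]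
    [NormedAddCommGroup Y] [NormedSpace ℝ Y] (x : X) (y : Y) : Prop :=
  ∃ r > 0, ∃ μ > 0, IsCPPConst x y r μ

/-- `(x, y)` is a weakly compatible point pair (weak CPP). -/
def IsWeakCPP {X Y : Type*} [NormedAddCommGroup X] [NormedSpace ℝ X]
    [NormedAddCommGroup Y] [NormedSpace ℝ Y] (x : X) (y : Y) : Prop :=
  ∃ z : X, ‖z‖ = 1 ∧ BJOrth x z ∧ ∃ w : Y, ‖w‖ = 1 ∧ BJOrth y w ∧
    ∃ r > 0, ∃ μ > 0, ∀ a b : ℝ, ‖a • x + b • z - x‖ ≤ r → ‖a • x + b • z‖ = 1 →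
      ‖a • y + (b * μ) • w‖ ≤ 1

/-- A normed space is smooth if every unit vector has a unique supporting functional. -/
def SmoothSp (X : Type*) [NormedAddCommGroup X] [NormedSpace ℝ X] : Prop :=
  ∀ x : X, ‖x‖ = 1 → ∃! f : X →L[ℝ] ℝ, ‖f‖ = 1 ∧ f x = 1

/-- `(x, y')` is a `μ`-CPP with respect to the pair `(z, w)`. -/
def IsMuCPP {X Y : Type*} [NormedAddCommGroup X] [NormedSpace ℝ X]
    [NormedAddCommGroup Y] [NormedSpace ℝ Y] (x : X) (y' : Y) (z : X) (w : Y) (μ : ℝ) : Prop :=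
  ∃ r > 0, ∀ a b : ℝ, ‖a • x + b • z - x‖ ≤ r → ‖a • x + b • z‖ = 1 →
    ‖a • y' + (b * μ) • w‖ ≤ 1

section Aux

variable {X Y : Type*} [NormedAddCommGroup X] [NormedSpace ℝ X]
  [NormedAddCommGroup Y] [NormedSpace ℝ Y]

/-- auxiliary: existence of a supporting functional at `x` vanishing on `y`, in a 2-dim space -/
lemma aux_james [FiniteDimensional ℝ X] (hdX : Module.finrank ℝ X = 2)
    (x y : X) (hx : ‖x‖ = 1) (hy : ‖y‖ = 1)
    (hxy : ∀ t : ℝ, ‖x‖ ≤ ‖x + t • y‖) :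
    ∃ h : X →L[ℝ] ℝ, ‖h‖ = 1 ∧ h x = 1 ∧ h y = 0 := by
  have hli : LinearIndependent ℝ ![x, y] := by
    rw [linearIndependent_fin2]
    constructor
    · simp only [Matrix.cons_val_one, Matrix.head_cons, Matrix.cons_val_zero]
      intro h; rw [h] at hy; simp at hy
    · intro a h
      simp only [Matrix.cons_val_one, Matrix.head_cons, Matrix.cons_val_zero] at h
      have := hxy (-a)
      rw [hx, neg_smul, ← h] at this
      simp at this
      linarith
  have hcard : Fintype.card (Fin 2) = Module.finrank ℝ X := by simp [hdX]
  let B := basisOfLinearIndependentOfCardEqFinrank hli hcard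
  have hB : ⇑B = ![x, y] := coe_basisOfLinearIndependentOfCardEqFinrank hli hcard
  have hB0 : B 0 = x := by rw [hB]; rfl
  have hB1 : B 1 = y := by rw [hB]; rfl
  let h : X →L[ℝ] ℝ := LinearMap.toContinuousLinearMap (B.coord 0)
  have hval : ∀ v : X, h v = B.repr v 0 := fun v => rfl
  have key : ∀ α β : ℝ, ‖α‖ ≤ ‖α • x + β • y‖ := by
    intro α β
    rcases eq_or_ne α 0 with h0 | h0
    · simp [h0]
    · have hv : α • x + β • y = α • (x + (β / α) • y) := by
        rw [smul_add, smul_smul, mul_div_cancel₀ _ h0]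
      have h1 : 1 ≤ ‖x + (β / α) • y‖ := by
        have := hxy (β / α); rwa [hx] at this
      rw [hv, norm_smul]
      calc ‖α‖ = ‖α‖ * 1 := (mul_one _).symm
        _ ≤ ‖α‖ * ‖x + (β / α) • y‖ := mul_le_mul_of_nonneg_left h1 (norm_nonneg _)
  have hbound : ∀ v : X, ‖h v‖ ≤ 1 * ‖v‖ := by
    intro v
    have hv : v = B.repr v 0 • x + B.repr v 1 • y := by
      conv_lhs => rw [← B.sum_repr v]
      rw [Fin.sum_univ_two, hB0, hB1]
    rw [hval, one_mul]
    calc ‖(B.repr v) 0‖ ≤ ‖B.repr v 0 • x + B.repr v 1 • y‖ := key _ _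
      _ = ‖v‖ := by rw [← hv]
  have hhx : h x = 1 := by rw [hval, ← hB0, B.repr_self]; simp
  have hhy : h y = 0 := by rw [hval, ← hB1, B.repr_self]; simp
  refine ⟨h, le_antisymm (h.opNorm_le_bound zero_le_one hbound) ?_, hhx, hhy⟩
  calc (1 : ℝ) = ‖h x‖ / ‖x‖ := by rw [hhx, hx]; norm_num
    _ ≤ ‖h‖ := ContinuousLinearMap.ratio_le_opNorm h x

/-- auxiliary: smoothness transfers BJ-orthogonality through norm-attaining contractions -/
lemma aux_transfer [FiniteDimensional ℝ X] (hX : SmoothSp X)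
    (x y : X) (hx : ‖x‖ = 1)
    (h : X →L[ℝ] ℝ) (hh1 : ‖h‖ = 1) (hhx : h x = 1) (hhy : h y = 0)
    (S : X →L[ℝ] Y) (hS : ‖S‖ ≤ 1) (_hSx1 : ‖S x‖ = 1)
    (f : Y →L[ℝ] ℝ) (hf : ‖f‖ = 1) (hfx : f (S x) = 1) : f (S y) = 0 := by
  set g : X →L[ℝ] ℝ := f.comp S with hg
  have hgx : g x = 1 := hfx
  have hgle : ‖g‖ ≤ 1 := by
    calc ‖g‖ ≤ ‖f‖ * ‖S‖ := ContinuousLinearMap.opNorm_comp_le f S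
      _ ≤ 1 := by rw [hf, one_mul]; exact hS
  have hgn : ‖g‖ = 1 := by
    refine le_antisymm hgle ?_
    calc (1 : ℝ) = ‖g x‖ / ‖x‖ := by rw [hgx, hx]; norm_num
      _ ≤ ‖g‖ := ContinuousLinearMap.ratio_le_opNorm g x
  obtain ⟨φ, -, huniq⟩ := hX x hx
  have h1 : g = φ := huniq g ⟨hgn, hgx⟩
  have h2 : h = φ := huniq h ⟨hh1, hhx⟩
  have : g y = h y := by rw [h1, h2]
  rw [hg] at this
  simpa [hhy] using this

end Aux

theorem stmt14 {X Y : Type*} [NormedAddCommGroup X] [NormedSpace ℝ X]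
    [NormedAddCommGroup Y] [NormedSpace ℝ Y] [StrictConvexSpace ℝ Y]
    [FiniteDimensional ℝ X] [FiniteDimensional ℝ Y]
    (hdX : Module.finrank ℝ X = 2) (hdY : Module.finrank ℝ Y = 2)
    (hX : SmoothSp X) (hY : SmoothSp Y) (T : X →L[ℝ] Y) (hT : ‖T‖ = 1)
    (hrank : Module.rank ℝ (LinearMap.range (T : X →ₗ[ℝ] Y)) = 2)
    (x : X) (hx : ‖x‖ = 1) (hM : {u : X | ‖u‖ = 1 ∧ ‖T u‖ = 1} = {x, -x})
    (y : X) (hy : ‖y‖ = 1) (hxy : BJOrth x y)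
    (hnex : T ∉ Set.extremePoints ℝ (closedBall (0 : X →L[ℝ] Y) 1)) :
    ∃ μ : ℝ, ‖T y‖ < μ ∧ IsMuCPP x (T x) y ((‖T y‖)⁻¹ • T y) μ := by
  -- x attains the norm
  have hTx : ‖T x‖ = 1 := by
    have hxm : x ∈ {u : X | ‖u‖ = 1 ∧ ‖T u‖ = 1} := by
      rw [hM]; exact Set.mem_insert _ _
    exact hxm.2
  -- T is injective
  have hfr : Module.finrank ℝ (LinearMap.range (T : X →ₗ[ℝ] Y)) = 2 := by
    rw [Module.finrank, hrank]; simp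
  have hker : LinearMap.ker (T : X →ₗ[ℝ] Y) = ⊥ := by
    have h1 := LinearMap.finrank_range_add_finrank_ker (T : X →ₗ[ℝ] Y)
    rw [hfr, hdX] at h1
    exact Submodule.finrank_eq_zero.mp (by omega)
  have hTy0 : T y ≠ 0 := by
    intro h
    have : y = 0 := by
      have := LinearMap.ker_eq_bot.mp hker
      exact this (by simpa using h)
    rw [this] at hy; simp at hy
  have hkpos : 0 < ‖T y‖ := norm_pos_iff.mpr hTy0
  -- linear independence in X
  have hliX : LinearIndependent ℝ ![x, y] := by
    rw [linearIndependent_fin2]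
    constructor
    · simp only [Matrix.cons_val_one, Matrix.head_cons, Matrix.cons_val_zero]
      intro h; rw [h] at hy; simp at hy
    intro a h
    simp only [Matrix.cons_val_one, Matrix.head_cons, Matrix.cons_val_zero] at h
    have := hxy (-a)
    rw [hx, neg_smul, ← h] at this
    simp at this; linarith
  have hcardX : Fintype.card (Fin 2) = Module.finrank ℝ X := by simp [hdX]
  let B := basisOfLinearIndependentOfCardEqFinrank hliX hcardX
  have hB : ⇑B = ![x, y] := coe_basisOfLinearIndependentOfCardEqFinrank hliX hcardX
  have hB0 : B 0 = x := by rw [hB]; rfl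
  have hB1 : B 1 = y := by rw [hB]; rfl
  clear_value B
  -- linear independence in Y
  have hliY : LinearIndependent ℝ ![T x, T y] := by
    have h1 := hliX.map' (T : X →ₗ[ℝ] Y) hker
    have h2 : ((T : X →ₗ[ℝ] Y) ∘ ![x, y]) = ![T x, T y] := by
      funext i; fin_cases i <;> simp
    rwa [h2] at h1
  have hcardY : Fintype.card (Fin 2) = Module.finrank ℝ Y := by simp [hdY]
  let C := basisOfLinearIndependentOfCardEqFinrank hliY hcardY
  have hC : ⇑C = ![T x, T y] := coe_basisOfLinearIndependentOfCardEqFinrank hliY hcardY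
  have hC0 : C 0 = T x := by rw [hC]; rfl
  have hC1 : C 1 = T y := by rw [hC]; rfl
  clear_value C
  -- supporting functionals
  obtain ⟨h, hh1, hhx, hhy⟩ := aux_james hdX x y hx hy hxy
  have hTxne : T x ≠ 0 := by intro h0; rw [h0] at hTx; simp at hTx
  obtain ⟨f, hf1, hfTx⟩ := exists_dual_vector ℝ (T x) (norm_ne_zero_iff.mpr hTxne)
  rw [hTx] at hfTx
  have hfTx : f (T x) = 1 := by exact_mod_cast hfTx
  -- decompose T from non-extremality
  have hTmem : T ∈ closedBall (0 : X →L[ℝ] Y) 1 := by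
    rw [mem_closedBall_zero_iff]; exact hT.le
  rw [mem_extremePoints] at hnex
  push_neg at hnex
  obtain ⟨T1, hT1mem, T2, hT2mem, hseg, hne12⟩ := hnex hTmem
  obtain ⟨a, b, ha, hb, hab, hsum⟩ := hseg
  have hT1le : ‖T1‖ ≤ 1 := mem_closedBall_zero_iff.mp hT1mem
  have hT2le : ‖T2‖ ≤ 1 := mem_closedBall_zero_iff.mp hT2mem
  have hT1T2 : T1 ≠ T2 := by
    intro h0
    have hTT1 : T1 = T := by
      rw [← hsum, h0, ← add_smul, hab, one_smul]
    exact (hne12 hTT1) (h0 ▸ hTT1)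
  have happ : ∀ v : X, a • T1 v + b • T2 v = T v := by
    intro v
    rw [← hsum]
    simp [ContinuousLinearMap.add_apply, ContinuousLinearMap.smul_apply]
  -- T1 x = T2 x = T x
  have hT1xle : ‖T1 x‖ ≤ 1 := by
    calc ‖T1 x‖ ≤ ‖T1‖ * ‖x‖ := T1.le_opNorm x
      _ ≤ 1 := by rw [hx, mul_one]; exact hT1le
  have hT2xle : ‖T2 x‖ ≤ 1 := by
    calc ‖T2 x‖ ≤ ‖T2‖ * ‖x‖ := T2.le_opNorm x
      _ ≤ 1 := by rw [hx, mul_one]; exact hT2le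
  have hT1xT2x : T1 x = T2 x := by
    by_contra hne'
    have := norm_combo_lt_of_ne hT1xle hT2xle hne' ha hb hab
    rw [happ x, hTx] at this
    exact lt_irrefl _ this
  have hT1x : T1 x = T x := by
    rw [← happ x, hT1xT2x, ← add_smul, hab, one_smul]
  have hT2x : T2 x = T x := by rw [← hT1xT2x, hT1x]
  -- f vanishes on images of y
  have hfTy : f (T y) = 0 :=
    aux_transfer hX x y hx h hh1 hhx hhy T hT.le hTx f hf1 hfTx
  have hT1x1 : ‖T1 x‖ = 1 := by rw [hT1x, hTx]
  have hT2x1 : ‖T2 x‖ = 1 := by rw [hT2x, hTx]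
  have hfT1y : f (T1 y) = 0 :=
    aux_transfer hX x y hx h hh1 hhx hhy T1 hT1le hT1x1 f hf1 (by rw [hT1x]; exact hfTx)
  have hfT2y : f (T2 y) = 0 :=
    aux_transfer hX x y hx h hh1 hhx hhy T2 hT2le hT2x1 f hf1 (by rw [hT2x]; exact hfTx)
  -- vectors killed by f are multiples of T y
  have hspan : ∀ v : Y, f v = 0 → ∃ α : ℝ, v = α • T y := by
    intro v hv
    have hrep : v = C.repr v 0 • T x + C.repr v 1 • T y := by
      conv_lhs => rw [← C.sum_repr v]
      rw [Fin.sum_univ_two, hC0, hC1]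
    have h0 : C.repr v 0 = 0 := by
      have : f v = C.repr v 0 * f (T x) + C.repr v 1 * f (T y) := by
        conv_lhs => rw [hrep]
        simp [map_add, map_smul]
      rw [hv, hfTx, hfTy] at this
      simpa using this.symm
    refine ⟨C.repr v 1, ?_⟩
    conv_lhs => rw [hrep]
    rw [h0, zero_smul, zero_add]
  obtain ⟨α, hα⟩ := hspan (T1 y) hfT1y
  obtain ⟨β, hβ⟩ := hspan (T2 y) hfT2y
  -- coefficient relation
  have hcoef : a * α + b * β = 1 := by
    have h1 : a • T1 y + b • T2 y = T y := happ y
    rw [hα, hβ, smul_smul, smul_smul, ← add_smul] at h1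
    have := smul_left_injective ℝ hTy0 (by rw [h1, one_smul] : (a * α + b * β) • T y = (1 : ℝ) • T y)
    exact this
  have hαβ : α ≠ β := by
    intro h0
    apply hT1T2
    ext v
    have hrep : v = B.repr v 0 • x + B.repr v 1 • y := by
      conv_lhs => rw [← B.sum_repr v]
      rw [Fin.sum_univ_two, hB0, hB1]
    conv_lhs => rw [hrep]
    conv_rhs => rw [hrep]
    rw [map_add, map_add, map_smul, map_smul, map_smul, map_smul, hT1xT2x, hα, hβ, h0]
  -- a key sufficient condition
  have main : ∀ (S : X →L[ℝ] Y) (γ : ℝ), ‖S‖ ≤ 1 → S x = T x → S y = γ • T y → 1 < γ →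
      ∃ μ : ℝ, ‖T y‖ < μ ∧ IsMuCPP x (T x) y ((‖T y‖)⁻¹ • T y) μ := by
    intro S γ hS hSx hSy hγ
    have hkγ : ‖T y‖ < γ * ‖T y‖ := (lt_mul_iff_one_lt_left hkpos).mpr hγ
    refine ⟨γ * ‖T y‖, hkγ, 1, one_pos, ?_⟩
    intro a' b' _ hnorm1
    have hkey : a' • T x + (b' * (γ * ‖T y‖)) • ((‖T y‖)⁻¹ • T y) = S (a' • x + b' • y) := by
      rw [map_add, map_smul, map_smul, hSx, hSy, smul_smul, smul_smul]
      congr 1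
      congr 1
      field_simp
    rw [hkey]
    calc ‖S (a' • x + b' • y)‖ ≤ ‖S‖ * ‖a' • x + b' • y‖ := S.le_opNorm _
      _ ≤ 1 := by rw [hnorm1, mul_one]; exact hS
  -- one of α, β exceeds 1
  have hor : 1 < α ∨ 1 < β := by
    by_contra hcon
    push_neg at hcon
    obtain ⟨hα1, hβ1⟩ := hcon
    have e1 : (1 - α) * a + (1 - β) * b = 0 := by linear_combination hab - hcoef
    have e2 : 0 ≤ (1 - α) * a := mul_nonneg (by linarith) ha.le
    have e3 : 0 ≤ (1 - β) * b := mul_nonneg (by linarith) hb.le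
    have e4 : (1 - α) * a = 0 := by linarith
    have e5 : (1 - β) * b = 0 := by linarith
    have hα2 : α = 1 := by
      rcases mul_eq_zero.mp e4 with h | h
      · linarith
      · exact absurd h (ne_of_gt ha)
    have hβ2 : β = 1 := by
      rcases mul_eq_zero.mp e5 with h | h
      · linarith
      · exact absurd h (ne_of_gt hb)
    exact hαβ (hα2.trans hβ2.symm)
  rcases hor with hgt | hgt
  · exact main T1 α hT1le hT1x hα hgt
  · exact main T2 β hT2le hT2x hβ hgt
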